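/- In the setting of optimistically augmented MDPs, for any policy π and ascension function p⁺, the model bias Δ(π) = ⟨μ⁺(π) − μ(π), r⁺⟩ satisfies 0 ≤ Δ(π) ≤ (R_max/(1−γ)) ⟨μ(π), p⁺⟩, where μ⁺(π) is the occupancy measure of π in the augmented MDP and r⁺ is the augmented reward (equal to R_max at heaven, and (1−p⁺)r + p⁺R_max elsewhere, with 0 ≤ r ≤ R_max). -/

import Mathlib

open scoped ENNReal NNReal

noncomputable def saProb {X A : Type*} [Fintype A]
    (P : X → A → X → ℝ≥0∞) (π : X → A → ℝ≥0∞) (ν0 : X → ℝ≥0∞) : ℕ → X → A → ℝ≥0∞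
  | 0 => fun x a => ν0 x * π x a
  | (τ + 1) => fun x a => (∑' x' : X, ∑ a' : A, saProb P π ν0 τ x' a' * P x' a' x) * π x a

noncomputable def occ {X A : Type*} [Fintype A]
    (P : X → A → X → ℝ≥0∞) (π : X → A → ℝ≥0∞) (ν0 : X → ℝ≥0∞) (γ : ℝ≥0∞)
    (x : X) (a : A) : ℝ≥0∞ :=
  (1 - γ) * ∑' τ : ℕ, γ ^ τ * saProb P π ν0 τ x a

/-- Augmented transition kernel on `Option X`, where `none` is the absorbing heaven
state `x⁺`, reached from `(x, a)` with probability `pplus x a`. -/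
noncomputable def Pplus {X A : Type*} (P : X → A → X → ℝ≥0∞) (pplus : X → A → ℝ≥0∞) :
    Option X → A → Option X → ℝ≥0∞
  | some x, a, some x' => (1 - pplus x a) * P x a x'
  | some x, a, none => pplus x a
  | none, _, none => 1
  | none, _, some _ => 0

theorem tsum_option' {X : Type*} (f : Option X → ℝ≥0∞) :
    ∑' o, f o = f none + ∑' x, f (some x) := by
  have h0 : ∀ o : Option X, f o = o.elim (f none) 0 + o.elim 0 (fun x => f (some x)) := by
    intro o; cases o <;> simp
  rw [tsum_congr h0, ENNReal.tsum_add]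
  congr 1
  · exact tsum_eq_single none (by intro o ho; cases o with
      | none => exact absurd rfl ho | some x => rfl)
  · exact ((Option.some_injective X).tsum_eq
      (f := fun o : Option X => o.elim 0 (fun x => f (some x)))
      (by intro o ho; cases o with
          | none => simp at ho
          | some x => exact ⟨x, rfl⟩)).symm

theorem saProb_mass {X A : Type*} [Fintype A]
    (P : X → A → X → ℝ≥0∞) (π : X → A → ℝ≥0∞) (ν0 : X → ℝ≥0∞)
    (hP : ∀ x a, ∑' x', P x a x' = 1) (hπ : ∀ x, ∑ a, π x a = 1) (hν0 : ∑' x, ν0 x = 1) :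
    ∀ τ, ∑' x, ∑ a, saProb P π ν0 τ x a = 1 := by
  intro τ
  induction τ with
  | zero =>
    simp only [saProb]
    calc ∑' x, ∑ a, ν0 x * π x a = ∑' x, ν0 x * ∑ a, π x a := by
          refine tsum_congr fun x => (Finset.mul_sum _ _ _).symm
      _ = ∑' x, ν0 x := by simp [hπ]
      _ = 1 := hν0
  | succ τ ih =>
    simp only [saProb]
    have h1 : ∀ x : X, ∑ a, (∑' x' : X, ∑ a' : A, saProb P π ν0 τ x' a' * P x' a' x) * π x a
        = (∑' x' : X, ∑ a' : A, saProb P π ν0 τ x' a' * P x' a' x) := by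
      intro x; rw [← Finset.mul_sum, hπ, mul_one]
    rw [tsum_congr h1, ENNReal.tsum_comm]
    calc ∑' x' : X, ∑' x : X, ∑ a' : A, saProb P π ν0 τ x' a' * P x' a' x
        = ∑' x' : X, ∑ a' : A, ∑' x : X, saProb P π ν0 τ x' a' * P x' a' x := by
          exact tsum_congr fun x' => Summable.tsum_finsetSum (fun _ _ => ENNReal.summable)
      _ = ∑' x' : X, ∑ a' : A, saProb P π ν0 τ x' a' := by
          refine tsum_congr fun x' => Finset.sum_congr rfl fun a' _ => ?_
          rw [ENNReal.tsum_mul_left, hP, mul_one]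
      _ = 1 := ih

theorem Pplus_mass {X A : Type*} (P : X → A → X → ℝ≥0∞) (pplus : X → A → ℝ≥0∞)
    (hP : ∀ (x : X) (a : A), ∑' x', P x a x' = 1) (hpl : ∀ x a, pplus x a ≤ 1) :
    ∀ (o : Option X) (a : A), ∑' o', Pplus P pplus o a o' = 1 := by
  intro o a
  cases o with
  | none => rw [tsum_option']; simp [Pplus]
  | some x =>
    rw [tsum_option']
    show pplus x a + ∑' x', (1 - pplus x a) * P x a x' = 1
    rw [ENNReal.tsum_mul_left, hP, mul_one, add_comm, tsub_add_cancel_of_le (hpl x a)]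

theorem saProb_dom {X A : Type*} [Fintype A]
    (P : X → A → X → ℝ≥0∞) (pplus : X → A → ℝ≥0∞) (π : Option X → A → ℝ≥0∞) (ν0 : X → ℝ≥0∞) :
    ∀ (τ : ℕ) (x : X) (a : A),
      saProb (Pplus P pplus) π (fun o => o.elim 0 ν0) τ (some x) a
        ≤ saProb P (fun x a => π (some x) a) ν0 τ x a := by
  intro τ
  induction τ with
  | zero => intro x a; simp [saProb]
  | succ τ ih =>
    intro x a
    simp only [saProb]
    refine mul_le_mul_left ?_ _
    rw [tsum_option']
    have hnone : ∑ a' : A, saProb (Pplus P pplus) π (fun o => o.elim 0 ν0) τ none a'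
        * Pplus P pplus none a' (some x) = 0 := by
      simp [Pplus]
    rw [hnone, zero_add]
    refine ENNReal.tsum_le_tsum fun x' => Finset.sum_le_sum fun a' _ => ?_
    show saProb _ π _ τ (some x') a' * ((1 - pplus x' a') * P x' a' x) ≤ _
    refine mul_le_mul (ih x' a') ?_ (zero_le) (zero_le)
    exact mul_le_of_le_one_left (zero_le) (tsub_le_self.trans le_rfl)

theorem occ_pairing {X A : Type*} [Fintype A]
    (P : X → A → X → ℝ≥0∞) (π : X → A → ℝ≥0∞) (ν0 : X → ℝ≥0∞) (c : ℝ≥0∞) (f : X → A → ℝ≥0∞) :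
    ∑' x, ∑ a, occ P π ν0 c x a * f x a
      = (1 - c) * ∑' τ : ℕ, c ^ τ * ∑' x, ∑ a, saProb P π ν0 τ x a * f x a := by
  have h1 : ∀ (x : X) (a : A), occ P π ν0 c x a * f x a
      = (1 - c) * ∑' τ : ℕ, c ^ τ * saProb P π ν0 τ x a * f x a := by
    intro x a
    rw [occ, mul_assoc]
    congr 1
    exact ENNReal.tsum_mul_right.symm
  calc ∑' x, ∑ a, occ P π ν0 c x a * f x a
      = ∑' x, (1 - c) * ∑ a, ∑' τ : ℕ, c ^ τ * saProb P π ν0 τ x a * f x a := by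
        refine tsum_congr fun x => ?_
        rw [Finset.mul_sum]
        exact Finset.sum_congr rfl fun a _ => h1 x a
    _ = (1 - c) * ∑' x, ∑ a, ∑' τ : ℕ, c ^ τ * saProb P π ν0 τ x a * f x a :=
        ENNReal.tsum_mul_left
    _ = (1 - c) * ∑' x, ∑' τ : ℕ, ∑ a, c ^ τ * saProb P π ν0 τ x a * f x a := by
        congr 1
        exact tsum_congr fun x => (Summable.tsum_finsetSum (fun _ _ => ENNReal.summable)).symm
    _ = (1 - c) * ∑' τ : ℕ, ∑' x, ∑ a, c ^ τ * saProb P π ν0 τ x a * f x a := by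
        rw [ENNReal.tsum_comm]
    _ = (1 - c) * ∑' τ : ℕ, c ^ τ * ∑' x, ∑ a, saProb P π ν0 τ x a * f x a := by
        congr 1
        refine tsum_congr fun τ => ?_
        rw [← ENNReal.tsum_mul_left]
        refine tsum_congr fun x => ?_
        rw [Finset.mul_sum]
        exact Finset.sum_congr rfl fun a _ => by ring

theorem occ_mass {X A : Type*} [Fintype A]
    (P : X → A → X → ℝ≥0∞) (π : X → A → ℝ≥0∞) (ν0 : X → ℝ≥0∞) (c : ℝ≥0∞)
    (hP : ∀ x a, ∑' x', P x a x' = 1) (hπ : ∀ x, ∑ a, π x a = 1) (hν0 : ∑' x, ν0 x = 1)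
    (hc : c < 1) :
    ∑' x, ∑ a, occ P π ν0 c x a = 1 := by
  have h1c : (1 : ℝ≥0∞) - c ≠ 0 := by
    rw [Ne, tsub_eq_zero_iff_le]; exact not_le.mpr hc
  have h1ctop : (1 : ℝ≥0∞) - c ≠ ⊤ := ne_top_of_le_ne_top ENNReal.one_ne_top tsub_le_self
  have h := occ_pairing P π ν0 c (fun _ _ => 1)
  simp only [mul_one] at h
  rw [h]
  have h2 : ∀ τ : ℕ, c ^ τ * (∑' x, ∑ a, saProb P π ν0 τ x a) = c ^ τ := by
    intro τ; rw [saProb_mass P π ν0 hP hπ hν0 τ, mul_one]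
  rw [tsum_congr h2, ENNReal.tsum_geometric]
  exact ENNReal.mul_inv_cancel h1c h1ctop

/-- Model-bias bounds: `0 ≤ ⟨μ⁺(π) − μ(π), r⁺⟩ ≤ (R_max/(1−γ)) ⟨μ(π), p⁺⟩`. -/
theorem model_bias_bounds {X A : Type*} [Countable X] [Fintype A]
    (P : X → A → X → ℝ≥0∞) (pplus : X → A → ℝ≥0∞) (π : Option X → A → ℝ≥0∞)
    (ν0 : X → ℝ≥0∞) (γ : ℝ≥0)
    (hP : ∀ x a, ∑' x', P x a x' = 1) (hpl : ∀ x a, pplus x a ≤ 1)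
    (hπ : ∀ o, ∑ a, π o a = 1) (hν0 : ∑' x, ν0 x = 1) (hγ0 : 0 < γ) (hγ : γ < 1)
    (r : X → A → ℝ) (Rmax : ℝ) (hRmax : 0 < Rmax)
    (hr : ∀ x a, 0 ≤ r x a ∧ r x a ≤ Rmax)
    -- the augmented mean reward: `(1 − p⁺) r + p⁺ R_max` outside heaven
    (rplus : X → A → ℝ)
    (hrplus : ∀ x a, rplus x a =
      (1 - (pplus x a).toReal) * r x a + (pplus x a).toReal * Rmax)
    -- occupancy measures of `π` in the augmented and in the original MDP
    (μplus : Option X → A → ℝ≥0∞) (μ : X → A → ℝ≥0∞)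
    (hμplus : ∀ o a, μplus o a = occ (Pplus P pplus) π (fun o => o.elim 0 ν0) (γ : ℝ≥0∞) o a)
    (hμ : ∀ x a, μ x a = occ P (fun x a => π (some x) a) ν0 (γ : ℝ≥0∞) x a)
    -- the model bias `Δ(π) = ⟨μ⁺(π) − μ(π), r⁺⟩`, with `r⁺ = R_max` at heaven
    (Δ : ℝ)
    (hΔ : Δ = ((∑' x : X, ∑ a, (μplus (some x) a).toReal * rplus x a)
          + ∑ a, (μplus none a).toReal * Rmax)
          - ∑' x : X, ∑ a, (μ x a).toReal * rplus x a) :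
    0 ≤ Δ ∧ Δ ≤ Rmax / (1 - (γ : ℝ)) * ∑' x : X, ∑ a, (μ x a).toReal * (pplus x a).toReal := by
  classical
  set ν0' : Option X → ℝ≥0∞ := fun o => o.elim 0 ν0 with hν0'def
  set π' : X → A → ℝ≥0∞ := fun x a => π (some x) a with hπ'def
  set c : ℝ≥0∞ := (γ : ℝ≥0∞) with hcdef
  have hc1 : c < 1 := by rw [hcdef]; exact_mod_cast hγ
  have hcne : c ≠ ⊤ := by rw [hcdef]; exact ENNReal.coe_ne_top
  have h1c : (1 : ℝ≥0∞) - c ≠ 0 := by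
    rw [Ne, tsub_eq_zero_iff_le]; exact not_le.mpr hc1
  have h1ctop : (1 : ℝ≥0∞) - c ≠ ⊤ := ne_top_of_le_ne_top ENNReal.one_ne_top tsub_le_self
  have hgeo_fin : (∑' τ : ℕ, c ^ τ) ≠ ⊤ := by
    rw [ENNReal.tsum_geometric]; exact ENNReal.inv_ne_top.mpr h1c
  have hν0' : ∑' o : Option X, ν0' o = 1 := by
    rw [tsum_option']; simpa [hν0'def] using hν0
  have hπ' : ∀ x, ∑ a, π' x a = 1 := fun x => hπ (some x)
  have hPplus := Pplus_mass P pplus hP hpl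
  -- masses of the per-step distributions
  have hmass : ∀ τ, ∑' x, ∑ a, saProb P π' ν0 τ x a = 1 :=
    saProb_mass P π' ν0 hP hπ' hν0
  have hmassp : ∀ τ, ∑' o, ∑ a, saProb (Pplus P pplus) π ν0' τ o a = 1 :=
    saProb_mass (Pplus P pplus) π ν0' hPplus hπ hν0'
  -- occupancy masses
  have hμmass : ∑' x, ∑ a, μ x a = 1 := by
    calc ∑' x, ∑ a, μ x a = ∑' x, ∑ a, occ P π' ν0 c x a :=
          tsum_congr fun x => Finset.sum_congr rfl fun a _ => hμ x a
      _ = 1 := occ_mass P π' ν0 c hP hπ' hν0 hc1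
  have hμpmass : ∑' o, ∑ a, μplus o a = 1 := by
    calc ∑' o, ∑ a, μplus o a = ∑' o, ∑ a, occ (Pplus P pplus) π ν0' c o a :=
          tsum_congr fun o => Finset.sum_congr rfl fun a _ => hμplus o a
      _ = 1 := occ_mass (Pplus P pplus) π ν0' c hPplus hπ hν0' hc1
  -- pointwise domination
  have hdom : ∀ x a, μplus (some x) a ≤ μ x a := by
    intro x a
    rw [hμplus, hμ]
    refine mul_le_mul_right (ENNReal.tsum_le_tsum fun τ => mul_le_mul_right ?_ _) _
    exact saProb_dom P pplus π ν0 τ x a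
  -- notation
  set RmE : ℝ≥0∞ := ENNReal.ofReal Rmax with hRmEdef
  have hRmE_fin : RmE ≠ ⊤ := ENNReal.ofReal_ne_top
  set E : X → A → ℝ≥0∞ := fun x a =>
    (1 - pplus x a) * ENNReal.ofReal (r x a) + pplus x a * RmE with hEdef
  have hEle : ∀ x a, E x a ≤ RmE := by
    intro x a
    calc E x a ≤ (1 - pplus x a) * RmE + pplus x a * RmE := by
          refine add_le_add (mul_le_mul_right ?_ _) le_rfl
          exact ENNReal.ofReal_le_ofReal (hr x a).2
      _ = RmE := by rw [← add_mul, tsub_add_cancel_of_le (hpl x a), one_mul]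
  have hE_fin : ∀ x a, E x a ≠ ⊤ := fun x a => ne_top_of_le_ne_top hRmE_fin (hEle x a)
  have hEtoReal : ∀ x a, (E x a).toReal = rplus x a := by
    intro x a
    rw [hrplus, hEdef]
    have hp_fin : pplus x a ≠ ⊤ := ne_top_of_le_ne_top ENNReal.one_ne_top (hpl x a)
    rw [ENNReal.toReal_add
        (ENNReal.mul_ne_top (ne_top_of_le_ne_top ENNReal.one_ne_top tsub_le_self)
          ENNReal.ofReal_ne_top)
        (ENNReal.mul_ne_top hp_fin hRmE_fin),
      ENNReal.toReal_mul, ENNReal.toReal_mul,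
      ENNReal.toReal_ofReal (hr x a).1, hRmEdef, ENNReal.toReal_ofReal hRmax.le,
      ENNReal.toReal_sub_of_le (hpl x a) ENNReal.one_ne_top, ENNReal.toReal_one]
  -- main ENNReal quantities
  set Asum : ℝ≥0∞ := ∑' x, ∑ a, μplus (some x) a * E x a with hAdef
  set Bsum : ℝ≥0∞ := ∑' x, ∑ a, μ x a * E x a with hBdef
  set Hsum : ℝ≥0∞ := ∑ a, μplus none a with hHdef
  set Apm : ℝ≥0∞ := ∑' x, ∑ a, μplus (some x) a with hApmdef
  set Dp : ℝ≥0∞ := ∑' x, ∑ a, μ x a * pplus x a with hDpdef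
  have hsplit : Hsum + Apm = 1 := by
    rw [hHdef, hApmdef, ← tsum_option' (fun o => ∑ a, μplus o a)]
    exact hμpmass
  have hApm_fin : Apm ≠ ⊤ := by
    intro h
    rw [h, add_top] at hsplit
    exact ENNReal.one_ne_top hsplit.symm
  have hH_le_one : Hsum ≤ 1 := le_add_right le_rfl |>.trans hsplit.le
  have hB_le : Bsum ≤ RmE := by
    rw [hBdef]
    calc ∑' x, ∑ a, μ x a * E x a ≤ ∑' x, ∑ a, μ x a * RmE :=
          ENNReal.tsum_le_tsum fun x => Finset.sum_le_sum fun a _ =>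
            mul_le_mul_right (hEle x a) _
      _ = (∑' x, ∑ a, μ x a) * RmE := by
          rw [← ENNReal.tsum_mul_right]
          exact tsum_congr fun x => (Finset.sum_mul _ _ _).symm
      _ = RmE := by rw [hμmass, one_mul]
  have hB_fin : Bsum ≠ ⊤ := ne_top_of_le_ne_top hRmE_fin hB_le
  have hA_le_B : Asum ≤ Bsum :=
    ENNReal.tsum_le_tsum fun x => Finset.sum_le_sum fun a _ =>
      mul_le_mul_left (hdom x a) _
  have hA_fin : Asum ≠ ⊤ := ne_top_of_le_ne_top hB_fin hA_le_B
  -- lower bound in ℝ≥0∞ : Bsum ≤ Asum + RmE * Hsum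
  have hlow : Bsum ≤ Asum + RmE * Hsum := by
    set K : ℝ≥0∞ := ∑' x, ∑ a, (μ x a - μplus (some x) a) with hKdef
    have hKA : K + Apm = 1 := by
      rw [hKdef, hApmdef, ← ENNReal.tsum_add]
      rw [← hμmass]
      refine tsum_congr fun x => ?_
      rw [← Finset.sum_add_distrib]
      exact Finset.sum_congr rfl fun a _ => tsub_add_cancel_of_le (hdom x a)
    have hKH : K = Hsum := by
      have h1 : K = 1 - Apm := ENNReal.eq_sub_of_add_eq hApm_fin hKA
      have h2 : Hsum = 1 - Apm := ENNReal.eq_sub_of_add_eq hApm_fin hsplit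
      rw [h1, h2]
    have hBsplit : Bsum = Asum + ∑' x, ∑ a, (μ x a - μplus (some x) a) * E x a := by
      rw [hAdef, hBdef, ← ENNReal.tsum_add]
      refine tsum_congr fun x => ?_
      rw [← Finset.sum_add_distrib]
      refine Finset.sum_congr rfl fun a _ => ?_
      rw [← add_mul, add_comm, tsub_add_cancel_of_le (hdom x a)]
    rw [hBsplit]
    refine add_le_add le_rfl ?_
    calc ∑' x, ∑ a, (μ x a - μplus (some x) a) * E x a
        ≤ ∑' x, ∑ a, (μ x a - μplus (some x) a) * RmE :=
          ENNReal.tsum_le_tsum fun x => Finset.sum_le_sum fun a _ =>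
            mul_le_mul_right (hEle x a) _
      _ = K * RmE := by
          rw [hKdef, ← ENNReal.tsum_mul_right]
          exact tsum_congr fun x => (Finset.sum_mul _ _ _).symm
      _ = RmE * Hsum := by rw [hKH, mul_comm]
  -- upper bound in ℝ≥0∞ : Hsum ≤ D where Dp = (1-c) * D
  obtain ⟨D, hD_fin, hH_le_D, hDp_eq⟩ :
      ∃ D : ℝ≥0∞, D ≠ ⊤ ∧ Hsum ≤ D ∧ Dp = (1 - c) * D := by
    set g : ℕ → ℝ≥0∞ := fun τ => ∑ a, saProb (Pplus P pplus) π ν0' τ none a with hgdef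
    set cc : ℕ → ℝ≥0∞ := fun τ =>
      ∑' x, ∑ a', saProb (Pplus P pplus) π ν0' τ (some x) a' * pplus x a' with hccdef
    set d : ℕ → ℝ≥0∞ := fun τ => ∑' x, ∑ a, saProb P π' ν0 τ x a * pplus x a with hddef
    have hg0 : g 0 = 0 := by
      rw [hgdef]
      refine Finset.sum_eq_zero fun a _ => ?_
      show ν0' none * π none a = 0
      simp [hν0'def]
    have hgrec : ∀ τ, g (τ + 1) = g τ + cc τ := by
      intro τ
      have e1 : g (τ + 1) = (∑' o : Option X, ∑ a' : A,
          saProb (Pplus P pplus) π ν0' τ o a' * Pplus P pplus o a' none) * ∑ a, π none a := by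
        simp only [hgdef]
        simp only [saProb]
        rw [Finset.mul_sum]
      rw [e1, hπ, mul_one, tsum_option']
      congr 1
      simp only [hgdef]
      exact Finset.sum_congr rfl fun a' _ => mul_one _
    have hg_le : ∀ τ, g τ ≤ 1 := by
      intro τ
      calc g τ ≤ ∑' o : Option X, ∑ a, saProb (Pplus P pplus) π ν0' τ o a :=
            ENNReal.le_tsum none
        _ = 1 := hmassp τ
    set S : ℝ≥0∞ := ∑' τ : ℕ, c ^ τ * g τ with hSdef
    set C : ℝ≥0∞ := ∑' τ : ℕ, c ^ τ * cc τ with hCdef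
    have hS_fin : S ≠ ⊤ := by
      refine ne_top_of_le_ne_top hgeo_fin ?_
      rw [hSdef]
      exact ENNReal.tsum_le_tsum fun τ => by
        calc c ^ τ * g τ ≤ c ^ τ * 1 := mul_le_mul_right (hg_le τ) _
          _ = c ^ τ := mul_one _
    have hSrec : S = c * S + c * C := by
      have h0 : S = (c ^ 0 * g 0) + ∑' τ : ℕ, c ^ (τ + 1) * g (τ + 1) :=
        tsum_eq_zero_add' ENNReal.summable
      have h1 : ∑' τ : ℕ, c ^ (τ + 1) * g (τ + 1)
          = ∑' τ : ℕ, (c * (c ^ τ * g τ) + c * (c ^ τ * cc τ)) :=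
        tsum_congr fun τ => by rw [hgrec τ, pow_succ]; ring
      have h2 : ∑' τ : ℕ, (c * (c ^ τ * g τ) + c * (c ^ τ * cc τ))
          = c * S + c * C := by
        rw [ENNReal.tsum_add, ENNReal.tsum_mul_left, ENNReal.tsum_mul_left, ← hSdef, ← hCdef]
      conv_lhs => rw [h0]
      rw [h1, h2, pow_zero, one_mul, hg0, zero_add]
    have hcS_fin : c * S ≠ ⊤ := ENNReal.mul_ne_top hcne hS_fin
    have hHS : Hsum = (1 - c) * S := by
      rw [hHdef, hSdef]
      calc ∑ a, μplus none a = ∑ a, (1 - c) * ∑' τ : ℕ, c ^ τ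
            * saProb (Pplus P pplus) π ν0' τ none a := by
            exact Finset.sum_congr rfl fun a _ => hμplus none a
        _ = (1 - c) * ∑ a, ∑' τ : ℕ, c ^ τ * saProb (Pplus P pplus) π ν0' τ none a := by
            rw [Finset.mul_sum]
        _ = (1 - c) * ∑' τ : ℕ, ∑ a, c ^ τ * saProb (Pplus P pplus) π ν0' τ none a := by
            rw [Summable.tsum_finsetSum (fun _ _ => ENNReal.summable)]
        _ = (1 - c) * ∑' τ : ℕ, c ^ τ * g τ := by
            congr 1
            exact tsum_congr fun τ => (Finset.mul_sum _ _ _).symm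
    have hH_eq : Hsum = c * C := by
      rw [hHS]
      have h1 : (1 - c) * S = 1 * S - c * S := ENNReal.sub_mul (fun _ _ => hS_fin)
      rw [h1, one_mul]
      nth_rewrite 1 [hSrec]
      exact ENNReal.add_sub_cancel_left hcS_fin
    have hcc_le_d : ∀ τ, cc τ ≤ d τ := by
      intro τ
      exact ENNReal.tsum_le_tsum fun x => Finset.sum_le_sum fun a _ =>
        mul_le_mul_left (saProb_dom P pplus π ν0 τ x a) _
    have hd_le_one : ∀ τ, d τ ≤ 1 := by
      intro τ
      calc d τ ≤ ∑' x, ∑ a, saProb P π' ν0 τ x a :=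
            ENNReal.tsum_le_tsum fun x => Finset.sum_le_sum fun a _ =>
              mul_le_of_le_one_right (zero_le) (hpl x a)
        _ = 1 := hmass τ
    refine ⟨∑' τ : ℕ, c ^ τ * d τ, ?_, ?_, ?_⟩
    · refine ne_top_of_le_ne_top hgeo_fin ?_
      exact ENNReal.tsum_le_tsum fun τ => by
        calc c ^ τ * d τ ≤ c ^ τ * 1 := mul_le_mul_right (hd_le_one τ) _
          _ = c ^ τ := mul_one _
    · calc Hsum = c * C := hH_eq
        _ ≤ 1 * C := mul_le_mul_left hc1.le _
        _ = C := one_mul _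
        _ ≤ ∑' τ : ℕ, c ^ τ * d τ :=
            ENNReal.tsum_le_tsum fun τ => mul_le_mul_right (hcc_le_d τ) _
    · rw [hDpdef]
      calc ∑' x, ∑ a, μ x a * pplus x a
          = ∑' x, ∑ a, occ P π' ν0 c x a * pplus x a :=
            tsum_congr fun x => Finset.sum_congr rfl fun a _ => by rw [hμ]
        _ = (1 - c) * ∑' τ : ℕ, c ^ τ * d τ := occ_pairing P π' ν0 c pplus
  -- conversions to real numbers
  have hfin_term : ∀ (f : X → A → ℝ≥0∞) (g : X → A → ℝ≥0∞),
      (∀ x a, f x a ≤ 1) → (∀ x a, g x a ≠ ⊤) →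
      ∑' x : X, ∑ a, (f x a).toReal * (g x a).toReal
        = (∑' x : X, ∑ a, f x a * g x a).toReal := by
    intro f g hf hg
    have h1 : ∀ x, (∑ a, f x a * g x a) ≠ ⊤ := by
      intro x
      refine (ENNReal.sum_lt_top.mpr fun a _ => ?_).ne
      exact lt_top_iff_ne_top.mpr (ENNReal.mul_ne_top
        (ne_top_of_le_ne_top ENNReal.one_ne_top (hf x a)) (hg x a))
    rw [ENNReal.tsum_toReal_eq h1]
    refine tsum_congr fun x => ?_
    rw [ENNReal.toReal_sum (fun a _ => ENNReal.mul_ne_top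
      (ne_top_of_le_ne_top ENNReal.one_ne_top (hf x a)) (hg x a))]
    exact Finset.sum_congr rfl fun a _ => (ENNReal.toReal_mul).symm
  have hμp_le_one : ∀ o a, μplus o a ≤ 1 := by
    intro o a
    calc μplus o a ≤ ∑ a', μplus o a' :=
          Finset.single_le_sum (fun _ _ => zero_le) (Finset.mem_univ a)
      _ ≤ ∑' o', ∑ a', μplus o' a' := ENNReal.le_tsum o
      _ = 1 := hμpmass
  have hμ_le_one : ∀ x a, μ x a ≤ 1 := by
    intro x a
    calc μ x a ≤ ∑ a', μ x a' :=
          Finset.single_le_sum (fun _ _ => zero_le) (Finset.mem_univ a)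
      _ ≤ ∑' x', ∑ a', μ x' a' := ENNReal.le_tsum x
      _ = 1 := hμmass
  have hT1 : ∑' x : X, ∑ a, (μplus (some x) a).toReal * rplus x a = Asum.toReal := by
    rw [hAdef, ← hfin_term _ _ (fun x a => hμp_le_one (some x) a) hE_fin]
    exact tsum_congr fun x => Finset.sum_congr rfl fun a _ => by rw [hEtoReal]
  have hT3 : ∑' x : X, ∑ a, (μ x a).toReal * rplus x a = Bsum.toReal := by
    rw [hBdef, ← hfin_term _ _ hμ_le_one hE_fin]
    exact tsum_congr fun x => Finset.sum_congr rfl fun a _ => by rw [hEtoReal]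
  have hT4 : ∑' x : X, ∑ a, (μ x a).toReal * (pplus x a).toReal = Dp.toReal := by
    rw [hDpdef, ← hfin_term _ _ hμ_le_one
      (fun x a => ne_top_of_le_ne_top ENNReal.one_ne_top (hpl x a))]
  have hT2 : ∑ a, (μplus none a).toReal * Rmax = Hsum.toReal * Rmax := by
    rw [hHdef, ENNReal.toReal_sum (fun a _ =>
      ne_top_of_le_ne_top ENNReal.one_ne_top (hμp_le_one none a)), Finset.sum_mul]
  -- real-number facts
  have hγr : (γ : ℝ) < 1 := by exact_mod_cast hγ
  have h1γ : (0:ℝ) < 1 - (γ : ℝ) := by linarith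
  have h1c_toReal : ((1 : ℝ≥0∞) - c).toReal = 1 - (γ : ℝ) := by
    rw [hcdef, ENNReal.toReal_sub_of_le (by exact_mod_cast hγ.le) ENNReal.one_ne_top,
      ENNReal.toReal_one, ENNReal.coe_toReal]
  have hH_fin : Hsum ≠ ⊤ := ne_top_of_le_ne_top ENNReal.one_ne_top hH_le_one
  have hBr : Bsum.toReal ≤ Asum.toReal + Rmax * Hsum.toReal := by
    have h := ENNReal.toReal_mono
      (by exact ENNReal.add_ne_top.mpr ⟨hA_fin, ENNReal.mul_ne_top hRmE_fin hH_fin⟩) hlow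
    rwa [ENNReal.toReal_add hA_fin (ENNReal.mul_ne_top hRmE_fin hH_fin),
      ENNReal.toReal_mul, hRmEdef, ENNReal.toReal_ofReal hRmax.le] at h
  have hAr : Asum.toReal ≤ Bsum.toReal := ENNReal.toReal_mono hB_fin hA_le_B
  have hHr : Hsum.toReal ≤ D.toReal := ENNReal.toReal_mono hD_fin hH_le_D
  have hDpr : Dp.toReal = (1 - (γ : ℝ)) * D.toReal := by
    rw [hDp_eq, ENNReal.toReal_mul, h1c_toReal]
  rw [hΔ, hT1, hT2, hT3]
  constructor
  · linarith
  · rw [hT4, hDpr]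
    have hfs : Rmax / (1 - (γ : ℝ)) * ((1 - (γ : ℝ)) * D.toReal) = Rmax * D.toReal := by
      field_simp
    rw [hfs]
    have h2 : Hsum.toReal * Rmax ≤ D.toReal * Rmax :=
      mul_le_mul_of_nonneg_right hHr hRmax.le
    linarith
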